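/- Let H be a real Hilbert space, λ ∈ ℝ, and let f : H → (-∞,∞] be proper, λ-convex and lower semicontinuous. Let δ > 0 and let γ : [0,δ] → H be absolutely continuous with I_f^δ(γ) < ∞. Then f(γ(0)) < ∞, f(γ(δ)) < ∞, and 2|f(γ(δ)) − f(γ(0))| ≤ I_f^δ(γ). -/

import Mathlib

open Filter Topology MeasureTheory Set
open scoped ENNReal RealInnerProductSpace

noncomputable section

attribute [local instance] Classical.propDecidable

variable {H : Type*} [NormedAddCommGroup H] [InnerProductSpace ℝ H] [CompleteSpace H]

/-- `f : H → (-∞,∞]` is proper: not identically `⊤` (and it never takes the value `⊥`). -/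
def ProperFn (f : H → EReal) : Prop :=
  (∃ x, f x ≠ ⊤) ∧ ∀ x, f x ≠ ⊥

/-- `f` is `λ`-convex: `x ↦ f x - (λ/2)‖x‖²` is convex, expressed via the perturbed
convexity inequality. -/
def LambdaConvex (lam : ℝ) (f : H → EReal) : Prop :=
  ∀ x y : H, ∀ t : ℝ, 0 ≤ t → t ≤ 1 →
    f ((1 - t) • x + t • y)
      ≤ ((1 - t : ℝ) : EReal) * f x + ((t : ℝ) : EReal) * f y
        - ((lam / 2 * (t * (1 - t)) * ‖x - y‖ ^ 2 : ℝ) : EReal)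

/-- The subdifferential of a `λ`-convex function at `x` (contained in the domain of `f`). -/
def subdiff (lam : ℝ) (f : H → EReal) (x : H) : Set H :=
  {p : H | f x ≠ ⊤ ∧
    ∀ y : H, f x + ((⟪p, y - x⟫ + lam / 2 * ‖y - x‖ ^ 2 : ℝ) : EReal) ≤ f y}

/-- `∇f(x)`: the element of minimal norm of `∂f(x)` (junk value `0` if there is none). -/
def gradMin (lam : ℝ) (f : H → EReal) (x : H) : H :=
  if h : ∃ p ∈ subdiff lam f x, ∀ q ∈ subdiff lam f x, ‖p‖ ≤ ‖q‖ then h.choose else 0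

/-- `|∇f|(x) ∈ [0,∞]`, equal to `+∞` when `∂f(x) = ∅` (in particular when `f x = ⊤`). -/
def gradNorm (lam : ℝ) (f : H → EReal) (x : H) : ℝ≥0∞ :=
  if (subdiff lam f x).Nonempty then ENNReal.ofReal ‖gradMin lam f x‖ else ⊤

/-- The resolvent `J_τ(x)`: the minimizer of `y ↦ f y + ‖y-x‖²/(2τ)` (junk `0` if none). -/
def Jres (f : H → EReal) (τ : ℝ) (x : H) : H :=
  if h : ∃ y : H, ∀ z : H,
      f y + ((‖y - x‖ ^ 2 / (2 * τ) : ℝ) : EReal)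
        ≤ f z + ((‖z - x‖ ^ 2 / (2 * τ) : ℝ) : EReal)
  then h.choose else 0

/-- The Moreau–Yosida regularization `f_τ(x) = min_y (f y + ‖y-x‖²/(2τ))`. -/
def moreau (f : H → EReal) (τ : ℝ) (x : H) : ℝ :=
  (f (Jres f τ x)).toReal + ‖Jres f τ x - x‖ ^ 2 / (2 * τ)

/-- `γ` is absolutely continuous on `[a,b]` with an integrable derivative. -/
abbrev IsACCurve (a b : ℝ) (γ : ℝ → H) : Prop :=
  ∃ g : ℝ → H, IntegrableOn g (Icc a b) ∧ ∀ t ∈ Icc a b, γ t = γ a + ∫ s in a..t, g s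

/-- The action `I_f^{[a,b]}(γ) = ∫_a^b (‖γ̇‖² + |∇f|²(γ)) dt ∈ [0,∞]`, set to `+∞` when `γ`
is not absolutely continuous. -/
def actionFn (lam : ℝ) (f : H → EReal) (a b : ℝ) (γ : ℝ → H) : ℝ≥0∞ :=
  if h : IsACCurve a b γ then
    ∫⁻ t in Ioc a b, (ENNReal.ofReal (‖h.choose t‖ ^ 2) + gradNorm lam f (γ t) ^ 2)
  else ⊤

/-- `Θ_{f,x₀,x₁}`: the action on `[0,1]` with endpoint constraints. -/
def Theta (lam : ℝ) (f : H → EReal) (x0 x1 : H) (γ : ℝ → H) : ℝ≥0∞ :=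
  if γ 0 = x0 ∧ γ 1 = x1 then actionFn lam f 0 1 γ else ⊤

/-- `Γ_δ(x₀,x_δ)`: infimum of the action over curves joining the endpoints. -/
def GammaInf (lam : ℝ) (f : H → EReal) (δ : ℝ) (x0 xδ : H) : ℝ≥0∞ :=
  ⨅ (γ : ℝ → H) (_ : γ 0 = x0 ∧ γ δ = xδ), actionFn lam f 0 δ γ

/-- Mosco convergence of `fh` to `f`: recovery sequences for the strong topology, and the
`liminf` inequality along weakly convergent sequences. -/
def Mosco (fh : ℕ → H → EReal) (f : H → EReal) : Prop :=
  (∀ x : H, ∃ xh : ℕ → H, Tendsto xh atTop (𝓝 x) ∧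
      Filter.limsup (fun h => fh h (xh h)) atTop ≤ f x) ∧
  (∀ (xh : ℕ → H) (x : H),
      (∀ p : H, Tendsto (fun h => ⟪xh h, p⟫) atTop (𝓝 ⟪x, p⟫)) →
      f x ≤ Filter.liminf (fun h => fh h (xh h)) atTop)

lemma subdiff_mem_real (lam : ℝ) (f : H → EReal) (hbot : ∀ z, f z ≠ ⊥) {x p : H}
    (hp : p ∈ subdiff lam f x) {y : H} (hy : f y ≠ ⊤) :
    (f x).toReal + (⟪p, y - x⟫ + lam / 2 * ‖y - x‖ ^ 2) ≤ (f y).toReal := by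
  obtain ⟨hx, h⟩ := hp
  have h2 := h y
  rw [← EReal.coe_toReal hx (hbot x), ← EReal.coe_toReal hy (hbot y), ← EReal.coe_add,
    EReal.coe_le_coe_iff] at h2
  exact h2

lemma subdiff_isClosed (lam : ℝ) (f : H → EReal) (hbot : ∀ z, f z ≠ ⊥) (x : H) :
    IsClosed (subdiff lam f x) := by
  by_cases hx : f x = ⊤
  · have : subdiff lam f x = ∅ := by
      ext p; simp [subdiff, hx]
    rw [this]; exact isClosed_empty
  · have : subdiff lam f x =
        ⋂ y, {p : H | f x + ((⟪p, y - x⟫ + lam / 2 * ‖y - x‖ ^ 2 : ℝ) : EReal) ≤ f y} := by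
      ext p; simp [subdiff, hx]
    rw [this]
    refine isClosed_iInter fun y => ?_
    by_cases hy : f y = ⊤
    · simp [hy]
    · have : {p : H | f x + ((⟪p, y - x⟫ + lam / 2 * ‖y - x‖ ^ 2 : ℝ) : EReal) ≤ f y}
          = {p : H | (f x).toReal + (⟪p, y - x⟫ + lam / 2 * ‖y - x‖ ^ 2) ≤ (f y).toReal} := by
        ext p
        rw [mem_setOf_eq, mem_setOf_eq, ← EReal.coe_toReal hx (hbot x),
          ← EReal.coe_toReal hy (hbot y), ← EReal.coe_add, EReal.coe_le_coe_iff]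
        simp only [EReal.toReal_coe]
      rw [this]
      apply isClosed_le _ continuous_const
      exact (continuous_const.add (((continuous_id.inner continuous_const)).add
        continuous_const))

lemma subdiff_convex (lam : ℝ) (f : H → EReal) (hbot : ∀ z, f z ≠ ⊥) (x : H) :
    Convex ℝ (subdiff lam f x) := by
  intro p hp q hq a b ha hb hab
  have hx := hp.1
  refine ⟨hx, fun y => ?_⟩
  by_cases hy : f y = ⊤
  · simp [hy]
  · have h1 := subdiff_mem_real lam f hbot hp hy
    have h2 := subdiff_mem_real lam f hbot hq hy
    rw [← EReal.coe_toReal hx (hbot x), ← EReal.coe_toReal hy (hbot y), ← EReal.coe_add,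
      EReal.coe_le_coe_iff]
    have hin : ⟪a • p + b • q, y - x⟫ = a * ⟪p, y - x⟫ + b * ⟪q, y - x⟫ := by
      rw [inner_add_left, real_inner_smul_left, real_inner_smul_left]
    have e1 := mul_le_mul_of_nonneg_left h1 ha
    have e2 := mul_le_mul_of_nonneg_left h2 hb
    rw [hin]
    have hfx : a * (f x).toReal + b * (f x).toReal = (f x).toReal := by
      rw [← add_mul, hab, one_mul]
    have hfy : a * (f y).toReal + b * (f y).toReal = (f y).toReal := by
      rw [← add_mul, hab, one_mul]
    have hL : a * (lam / 2 * ‖y - x‖ ^ 2) + b * (lam / 2 * ‖y - x‖ ^ 2)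
        = lam / 2 * ‖y - x‖ ^ 2 := by rw [← add_mul, hab, one_mul]
    nlinarith [e1, e2]

lemma gradMin_spec (lam : ℝ) (f : H → EReal) (hbot : ∀ z, f z ≠ ⊥) {x : H}
    (hne : (subdiff lam f x).Nonempty) :
    gradMin lam f x ∈ subdiff lam f x ∧
      gradNorm lam f x = ENNReal.ofReal ‖gradMin lam f x‖ := by
  have hex : ∃ p ∈ subdiff lam f x, ∀ q ∈ subdiff lam f x, ‖p‖ ≤ ‖q‖ := by
    obtain ⟨v, hv, hvmin⟩ := exists_norm_eq_iInf_of_complete_convex hne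
      ((subdiff_isClosed lam f hbot x).isComplete) (subdiff_convex lam f hbot x) (0 : H)
    refine ⟨v, hv, fun q hq => ?_⟩
    have h0 : ‖v‖ = ⨅ w : subdiff lam f x, ‖(0 : H) - w‖ := by
      simpa using hvmin
    rw [h0]
    have : (⨅ w : subdiff lam f x, ‖(0 : H) - w‖) ≤ ‖(0:H) - q‖ := by
      exact ciInf_le ⟨0, by rintro r ⟨w, rfl⟩; positivity⟩ (⟨q, hq⟩ : subdiff lam f x)
    simpa using this
  constructor
  · rw [gradMin, dif_pos hex]
    exact hex.choose_spec.1
  · rw [gradNorm, if_pos hne]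

lemma twoPoint (lam : ℝ) (f : H → EReal) (hbot : ∀ z, f z ≠ ⊥) {x z p : H}
    (hp : p ∈ subdiff lam f x) (hz : f z ≠ ⊤) :
    (f x).toReal ≤ (f z).toReal + ‖p‖ * ‖x - z‖ + (|lam| / 2) * ‖x - z‖ ^ 2 := by
  have h := subdiff_mem_real lam f hbot hp hz
  have h1 : -⟪p, z - x⟫ ≤ ‖p‖ * ‖x - z‖ := by
    have := abs_real_inner_le_norm p (z - x)
    rw [norm_sub_rev z x] at this
    have := neg_le_of_abs_le this
    linarith
  have h2 : -(lam / 2 * ‖z - x‖ ^ 2) ≤ |lam| / 2 * ‖x - z‖ ^ 2 := by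
    rw [norm_sub_rev z x]
    have habs : -(lam/2) ≤ |lam|/2 := by
      have := neg_abs_le lam; linarith [abs_nonneg lam]
    nlinarith [sq_nonneg ‖x - z‖]
  linarith

lemma sq_setIntegral_le {q r : ℝ} (hqr : q ≤ r) {u : ℝ → ℝ}
    (hu : IntegrableOn u (Ioc q r)) (hu2 : IntegrableOn (fun x => u x ^ 2) (Ioc q r)) :
    (∫ x in Ioc q r, u x) ^ 2 ≤ (r - q) * ∫ x in Ioc q r, u x ^ 2 := by
  rcases eq_or_lt_of_le hqr with rfl | hlt
  · simp
  · set c : ℝ := (∫ x in Ioc q r, u x) / (r - q) with hc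
    have hnn : 0 ≤ ∫ x in Ioc q r, (u x - c) ^ 2 :=
      setIntegral_nonneg measurableSet_Ioc fun x _ => sq_nonneg _
    have hexp : ∀ x, (u x - c) ^ 2 = u x ^ 2 - (2 * c) * u x + c ^ 2 := fun x => by ring
    have hint : ∫ x in Ioc q r, (u x - c) ^ 2
        = (∫ x in Ioc q r, u x ^ 2) - (2 * c) * (∫ x in Ioc q r, u x) + c ^ 2 * (r - q) := by
      simp_rw [hexp]
      have hI : Integrable (fun x => u x ^ 2 - 2 * c * u x) (volume.restrict (Ioc q r)) :=
        hu2.sub (hu.const_mul (2 * c))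
      rw [integral_add (f := fun x => u x ^ 2 - 2 * c * u x) (g := fun _ => c ^ 2) hI
        (integrable_const _), integral_sub hu2 (hu.const_mul (2 * c)), integral_const_mul (2 * c),
        setIntegral_const]
      simp [Real.volume_Ioc, ENNReal.toReal_ofReal (by linarith : (0:ℝ) ≤ r - q), smul_eq_mul,
        mul_comm, hqr]
    rw [hint] at hnn
    have hrq : 0 < r - q := by linarith
    have hcc : c * (r - q) = ∫ x in Ioc q r, u x := by
      rw [hc, div_mul_cancel₀ _ hrq.ne']
    nlinarith [hnn, sq_nonneg c]

lemma le_of_forall_eps {a b K : ℝ} (hK : 0 ≤ K) (h : ∀ ε : ℝ, 0 < ε → a ≤ b + ε * K) :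
    a ≤ b := by
  by_contra hc
  push_neg at hc
  have h1 := h ((a - b) / (2 * (K + 1))) (div_pos (by linarith) (by positivity))
  have hK1 : 0 < K + 1 := by linarith
  have : (a - b) / (2 * (K + 1)) * K < (a - b) := by
    rw [div_mul_eq_mul_div, div_lt_iff₀ (by positivity)]
    nlinarith
  linarith

lemma gammaCont {δ : ℝ} {γ : ℝ → H} {g : ℝ → H}
    (hg : IntegrableOn g (Icc 0 δ))
    (hγeq : ∀ r ∈ Icc 0 δ, γ r = γ 0 + ∫ x in (0:ℝ)..r, g x) :
    ContinuousOn γ (Icc 0 δ) := by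
  have hprim : ContinuousOn (fun r => ∫ x in Ioc 0 r, g x) (Icc 0 δ) :=
    intervalIntegral.continuousOn_primitive hg
  have h2 : ContinuousOn (fun r => γ 0 + ∫ x in Ioc 0 r, g x) (Icc 0 δ) :=
    continuousOn_const.add hprim
  refine h2.congr fun r hr => ?_
  rw [hγeq r hr, intervalIntegral.integral_of_le hr.1]

lemma gammaDiff {δ : ℝ} {γ : ℝ → H} {g : ℝ → H}
    (hg : IntegrableOn g (Icc 0 δ))
    (hγeq : ∀ r ∈ Icc 0 δ, γ r = γ 0 + ∫ x in (0:ℝ)..r, g x)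
    {q r : ℝ} (hq : 0 ≤ q) (hqr : q ≤ r) (hr : r ≤ δ) :
    ‖γ r - γ q‖ ≤ ∫ x in Ioc q r, ‖g x‖ := by
  have hint : ∀ a b : ℝ, 0 ≤ a → b ≤ δ → a ≤ b → IntervalIntegrable g volume a b := by
    intro a b ha hb hab
    rw [intervalIntegrable_iff_integrableOn_Ioc_of_le hab]
    exact hg.mono_set fun x hx => ⟨le_trans ha (le_of_lt hx.1), le_trans hx.2 hb⟩
  have hqδ : q ≤ δ := le_trans hqr hr
  have h1 : γ r - γ q = ∫ x in q..r, g x := by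
    rw [hγeq r ⟨le_trans hq hqr, hr⟩, hγeq q ⟨hq, hqδ⟩]
    rw [add_sub_add_left_eq_sub]
    exact intervalIntegral.integral_interval_sub_left (hint 0 r (le_refl _) hr (le_trans hq hqr))
      (hint 0 q (le_refl _) hqδ hq)
  rw [h1]
  refine le_trans (intervalIntegral.norm_integral_le_integral_norm hqr) ?_
  rw [intervalIntegral.integral_of_le hqr]

lemma claimUp (lam : ℝ) (f : H → EReal) (hbot : ∀ z, f z ≠ ⊥) (hlsc : LowerSemicontinuous f)
    (δ : ℝ) (γ : ℝ → H) (g : ℝ → H)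
    (hg : IntegrableOn g (Icc 0 δ))
    (hγeq : ∀ r ∈ Icc 0 δ, γ r = γ 0 + ∫ x in (0:ℝ)..r, g x)
    (hg2 : IntegrableOn (fun x => ‖g x‖ ^ 2) (Icc 0 δ))
    (Hfin : ∫⁻ x in Ioc 0 δ, gradNorm lam f (γ x) ^ 2 ≠ ⊤)
    (s t : ℝ) (hs : 0 ≤ s) (hst : s ≤ t) (ht : t ≤ δ)
    (hfs : f (γ s) ≠ ⊤) :
    f (γ t) ≠ ⊤ ∧ (f (γ t)).toReal ≤ (f (γ s)).toReal
      + (1 / 2) * ((∫⁻ x in Ioc s t, gradNorm lam f (γ x) ^ 2).toReal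
        + ∫ x in Ioc s t, ‖g x‖ ^ 2) := by
  set C : ℝ := |lam| / 2 with hC
  have hC0 : 0 ≤ C := by positivity
  set G' : ℝ → ℝ≥0∞ := fun x => gradNorm lam f (γ x) ^ 2 with hG'
  set A : ℝ → ℝ := fun r => ∫ x in Ioc s r, ‖g x‖ ^ 2 with hA
  set L : ℝ → ℝ≥0∞ := fun r => ∫⁻ x in Ioc s r, G' x with hL
  set F : ℝ → ℝ := fun r => (f (γ r)).toReal with hF
  -- basic integrability / positivity facts
  have hsub : ∀ q r : ℝ, 0 ≤ q → r ≤ δ → Ioc q r ⊆ Icc 0 δ := by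
    intro q r hq hr x hx
    exact ⟨le_trans hq (le_of_lt hx.1), le_trans hx.2 hr⟩
  have hgInt2 : ∀ q r : ℝ, 0 ≤ q → r ≤ δ → IntegrableOn (fun x => ‖g x‖ ^ 2) (Ioc q r) :=
    fun q r hq hr => hg2.mono_set (hsub q r hq hr)
  have hgInt1 : ∀ q r : ℝ, 0 ≤ q → r ≤ δ → IntegrableOn (fun x => ‖g x‖) (Ioc q r) :=
    fun q r hq hr => IntegrableOn.mono_set hg.norm (hsub q r hq hr)
  have hIntNonneg : ∀ q r : ℝ, (0:ℝ) ≤ ∫ x in Ioc q r, ‖g x‖ ^ 2 :=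
    fun q r => setIntegral_nonneg measurableSet_Ioc fun x _ => by positivity
  have hIntNonneg1 : ∀ q r : ℝ, (0:ℝ) ≤ ∫ x in Ioc q r, ‖g x‖ :=
    fun q r => setIntegral_nonneg measurableSet_Ioc fun x _ => by positivity
  have hLfin : ∀ r : ℝ, r ≤ δ → (∫⁻ x in Ioc s r, G' x) ≠ ⊤ := by
    intro r hr
    exact ne_top_of_le_ne_top Hfin (lintegral_mono_set (Ioc_subset_Ioc hs hr))
  have hLfin' : ∀ q r : ℝ, 0 ≤ q → r ≤ δ → (∫⁻ x in Ioc q r, G' x) ≠ ⊤ := by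
    intro q r hq hr
    exact ne_top_of_le_ne_top Hfin (lintegral_mono_set (Ioc_subset_Ioc hq hr))
  have hAmono : ∀ q r : ℝ, q ≤ r → r ≤ δ → A q ≤ A r := by
    intro q r hqr hr
    exact setIntegral_mono_set (hgInt2 s r hs hr)
      (Filter.Eventually.of_forall fun x => by positivity)
      (HasSubset.Subset.eventuallyLE (Ioc_subset_Ioc_right hqr))
  have hAsplit : ∀ q r : ℝ, s ≤ q → q ≤ r → r ≤ δ →
      A r = A q + ∫ x in Ioc q r, ‖g x‖ ^ 2 := by
    intro q r hsq hqr hr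
    have : Ioc s r = Ioc s q ∪ Ioc q r := (Ioc_union_Ioc_eq_Ioc hsq hqr).symm
    rw [hA]
    simp only
    rw [this, setIntegral_union (Set.Ioc_disjoint_Ioc_of_le le_rfl) measurableSet_Ioc
      (hgInt2 s q hs (le_trans hqr hr)) (hgInt2 q r (le_trans hs hsq) hr)]
  have hLsplit : ∀ q r : ℝ, s ≤ q → q ≤ r → r ≤ δ →
      (∫⁻ x in Ioc s r, G' x) = (∫⁻ x in Ioc s q, G' x) + ∫⁻ x in Ioc q r, G' x := by
    intro q r hsq hqr hr
    have : Ioc s r = Ioc s q ∪ Ioc q r := (Ioc_union_Ioc_eq_Ioc hsq hqr).symm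
    rw [this, lintegral_union measurableSet_Ioc (Set.Ioc_disjoint_Ioc_of_le le_rfl)]
  have hγc : ContinuousOn γ (Icc 0 δ) := gammaCont hg hγeq
  -- main statement with the ε-error terms
  suffices hkey : ∀ ε : ℝ, 0 < ε → f (γ t) ≠ ⊤ ∧
      F t ≤ F s + (1 / 2) * ((L t).toReal + A t) + ε * ((t - s) + C * A t) by
    refine ⟨(hkey 1 one_pos).1, ?_⟩
    refine le_of_forall_eps (K := (t - s) + C * A t) ?_ fun ε hε => (hkey ε hε).2
    have := hIntNonneg s t
    have : 0 ≤ A t := by rw [hA]; exact this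
    nlinarith
  intro ε hε
  set B : ℝ → ℝ := fun r =>
    F s + (1 / 2) * ((L r).toReal + A r) + ε * (r - s) + C * ε * A r with hB
  set S : Set ℝ := {r | r ∈ Icc s t ∧ f (γ r) ≠ ⊤ ∧ F r ≤ B r} with hS
  have hsS : s ∈ S := by
    refine ⟨⟨le_refl s, hst⟩, hfs, ?_⟩
    have h1 : A s = 0 := by rw [hA]; simp [Set.Ioc_self]
    have h2 : L s = 0 := by rw [hL]; simp [Set.Ioc_self]
    rw [hB]
    simp only [h1, h2]
    simp
  have hSbdd : BddAbove S := ⟨t, fun r hr => hr.1.2⟩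
  have hSne : S.Nonempty := ⟨s, hsS⟩
  set u : ℝ := sSup S with hu
  have hus : s ≤ u := le_csSup hSbdd hsS
  have hut : u ≤ t := csSup_le hSne fun r hr => hr.1.2
  have huIcc : u ∈ Icc 0 δ := ⟨le_trans hs hus, le_trans hut ht⟩
  have hBmono : ∀ q r : ℝ, s ≤ q → q ≤ r → r ≤ δ → B q ≤ B r := by
    intro q r hsq hqr hr
    have h1 : (L q).toReal ≤ (L r).toReal :=
      ENNReal.toReal_mono (hLfin r hr) (lintegral_mono_set (Ioc_subset_Ioc_right hqr))
    have h2 : A q ≤ A r := hAmono q r hqr hr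
    have h3 : C * ε * A q ≤ C * ε * A r :=
      mul_le_mul_of_nonneg_left h2 (by positivity)
    have h4 : ε * (q - s) ≤ ε * (r - s) := by nlinarith
    rw [hB]; simp only; linarith
  -- Step A : u ∈ S
  have huS : u ∈ S := by
    have hfu : f (γ u) ≤ ((B u : ℝ) : EReal) := by
      by_contra hcon
      push_neg at hcon
      have hev := hlsc (γ u) _ hcon
      have hcw : ContinuousWithinAt γ (Icc 0 δ) u := hγc u huIcc
      have hev2 : ∀ᶠ r in 𝓝[Icc 0 δ] u, ((B u : ℝ) : EReal) < f (γ r) := hcw.eventually hev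
      rw [eventually_nhdsWithin_iff, Metric.eventually_nhds_iff] at hev2
      obtain ⟨η, hη, hball⟩ := hev2
      obtain ⟨r, hrS, hrgt⟩ := exists_lt_of_lt_csSup hSne (sub_lt_self u hη)
      have hru : r ≤ u := le_csSup hSbdd hrS
      have hdist : dist r u < η := by
        rw [Real.dist_eq, abs_lt]; constructor <;> linarith
      have hrIcc : r ∈ Icc 0 δ := ⟨le_trans hs hrS.1.1, le_trans hrS.1.2 ht⟩
      have hlt := hball hdist hrIcc
      have hle : f (γ r) ≤ ((B u : ℝ) : EReal) := by
        rw [← EReal.coe_toReal hrS.2.1 (hbot (γ r))]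
        exact_mod_cast le_trans hrS.2.2 (hBmono r u hrS.1.1 hru (le_trans hut ht))
      exact absurd (lt_of_lt_of_le hlt hle) (lt_irrefl _)
    refine ⟨⟨hus, hut⟩, ne_top_of_le_ne_top (EReal.coe_ne_top _) hfu, ?_⟩
    have := EReal.toReal_le_toReal hfu (hbot (γ u)) (EReal.coe_ne_top _)
    rw [EReal.toReal_coe] at this
    exact this
  -- Step B : u = t
  have hueq : u = t := by
    by_contra hune
    have hult : u < t := lt_of_le_of_ne hut hune
    set b : ℝ := min (u + ε) t with hb
    have hub : u < b := lt_min (by linarith) hult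
    have hbt : b ≤ t := min_le_right _ _
    have hbδ : b ≤ δ := le_trans hbt ht
    have hWsub : Ioo u b ⊆ Ioc 0 δ := fun x hx =>
      ⟨lt_of_le_of_lt (le_trans hs hus) hx.1, le_trans (le_of_lt hx.2) hbδ⟩
    set m : ℝ≥0∞ := ⨅ x ∈ Ioo u b, G' x with hm
    have hmtop : m ≠ ⊤ := by
      intro hmt
      have hall : ∀ x ∈ Ioo u b, G' x = ⊤ := by
        intro x hx
        have : m ≤ G' x := iInf₂_le x hx
        rw [hmt] at this
        exact top_le_iff.mp this
      have h1 : (⊤ : ℝ≥0∞) * volume (Ioo u b) ≤ ∫⁻ x in Ioo u b, G' x := by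
        rw [← setLIntegral_const]
        exact setLIntegral_mono' measurableSet_Ioo fun x hx => le_of_eq (hall x hx).symm
      have h2 : volume (Ioo u b) ≠ 0 := by
        rw [Real.volume_Ioo]
        simp only [ne_eq, ENNReal.ofReal_eq_zero, not_le]
        linarith
      rw [ENNReal.top_mul h2] at h1
      have h3 : (∫⁻ x in Ioo u b, G' x) ≤ ∫⁻ x in Ioc 0 δ, G' x := lintegral_mono_set hWsub
      exact Hfin (top_le_iff.mp (le_trans h1 h3))
    obtain ⟨r, hrW, hrlt⟩ : ∃ r ∈ Ioo u b, G' r < m + ENNReal.ofReal ε := by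
      by_contra hc
      push_neg at hc
      have h1 : m + ENNReal.ofReal ε ≤ m := le_iInf₂ hc
      have h2 : m < m + ENNReal.ofReal ε :=
        ENNReal.lt_add_right hmtop (by simp [ne_eq, ENNReal.ofReal_eq_zero, not_le, hε])
      exact absurd h1 (not_le.mpr h2)
    have hGr_ne : G' r ≠ ⊤ :=
      ne_top_of_le_ne_top (ENNReal.add_ne_top.mpr ⟨hmtop, ENNReal.ofReal_ne_top⟩) hrlt.le
    have hsubne : (subdiff lam f (γ r)).Nonempty := by
      by_contra hemp
      rw [not_nonempty_iff_eq_empty] at hemp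
      apply hGr_ne
      rw [hG']
      simp only [gradNorm, hemp]
      simp [ENNReal.top_pow]
    obtain ⟨hpmem, hgnval⟩ := gradMin_spec lam f hbot hsubne
    set p : H := gradMin lam f (γ r) with hp
    have hfr_ne : f (γ r) ≠ ⊤ := hpmem.1
    -- bound on ‖p‖²
    have hp2 : ‖p‖ ^ 2 ≤ m.toReal + ε := by
      have h1 : G' r = ENNReal.ofReal (‖p‖ ^ 2) := by
        rw [hG']
        simp only
        rw [hgnval, ← ENNReal.ofReal_pow (norm_nonneg _)]
      have h2 := ENNReal.toReal_mono (ENNReal.add_ne_top.mpr ⟨hmtop, ENNReal.ofReal_ne_top⟩)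
        hrlt.le
      rw [h1, ENNReal.toReal_ofReal (by positivity),
        ENNReal.toReal_add hmtop ENNReal.ofReal_ne_top,
        ENNReal.toReal_ofReal hε.le] at h2
      exact h2
    -- geometry of the step
    have hur : u < r := hrW.1
    have hrb : r < b := hrW.2
    have hrt : r ≤ t := le_trans (le_of_lt hrb) hbt
    have hrδ : r ≤ δ := le_trans hrt ht
    have hu0 : 0 ≤ u := le_trans hs hus
    set w : ℝ := r - u with hw
    have hw0 : 0 < w := by rw [hw]; linarith
    have hwh : w ≤ ε := by rw [hw]; have := min_le_left (u + ε) t; linarith [hrb, this]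
    set σ : ℝ := ∫ x in Ioc u r, ‖g x‖ with hσ
    have hσ0 : 0 ≤ σ := hIntNonneg1 u r
    set aq : ℝ := ∫ x in Ioc u r, ‖g x‖ ^ 2 with haq
    have haq0 : 0 ≤ aq := hIntNonneg u r
    have hD : ‖γ r - γ u‖ ≤ σ := gammaDiff hg hγeq hu0 (le_of_lt hur) hrδ
    have hD0 : (0:ℝ) ≤ ‖γ r - γ u‖ := norm_nonneg _
    have hσsq : σ ^ 2 ≤ w * aq := by
      rw [hσ, haq, hw]
      exact sq_setIntegral_le (le_of_lt hur) (hgInt1 u r hu0 hrδ) (hgInt2 u r hu0 hrδ)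
    -- m * w ≤ lintegral over the consumed piece
    set Lq : ℝ≥0∞ := ∫⁻ x in Ioc u r, G' x with hLq
    have hLqfin : Lq ≠ ⊤ := hLfin' u r hu0 hrδ
    have hwm : w * m.toReal ≤ Lq.toReal := by
      have h1 : m * volume (Ioc u r) ≤ Lq := by
        rw [hLq, ← setLIntegral_const]
        exact setLIntegral_mono' measurableSet_Ioc fun x hx =>
          iInf₂_le x ⟨hx.1, lt_of_le_of_lt hx.2 hrb⟩
      have h2 : volume (Ioc u r) = ENNReal.ofReal w := by rw [Real.volume_Ioc]
      rw [h2] at h1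
      have h3 := ENNReal.toReal_mono hLqfin h1
      rw [ENNReal.toReal_mul, ENNReal.toReal_ofReal hw0.le] at h3
      linarith
    -- two-point estimate
    have htp := twoPoint lam f hbot hpmem huS.2.1
    rw [← hC] at htp
    have hkey1 : ‖p‖ * ‖γ r - γ u‖ ≤ ‖p‖ * σ := mul_le_mul_of_nonneg_left hD (norm_nonneg p)
    have hkey3 : ‖p‖ * σ ≤ (1 / 2) * (Lq.toReal + aq) + ε * w := by
      have h2w : (0:ℝ) < 2 * w := by linarith
      rw [← mul_le_mul_iff_right₀ h2w]
      clear_value w σ aq Lq m p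
      linarith [sq_nonneg (w * ‖p‖ - σ), mul_le_mul_of_nonneg_left hp2 (sq_nonneg w),
        mul_le_mul_of_nonneg_left hwm hw0.le, hσsq, mul_nonneg hε.le (sq_nonneg w)]
    have hDsq : ‖γ r - γ u‖ ^ 2 ≤ w * aq := by
      have := pow_le_pow_left₀ hD0 hD 2
      linarith
    have hCd : C * ‖γ r - γ u‖ ^ 2 ≤ C * ε * aq := by
      have h1 : w * aq ≤ ε * aq := mul_le_mul_of_nonneg_right hwh haq0
      have h2 := mul_le_mul_of_nonneg_left (le_trans hDsq h1) hC0
      linarith [h2]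
    have hLsp : L r = L u + Lq := hLsplit u r hus hur.le hrδ
    have hLrt : (L r).toReal = (L u).toReal + Lq.toReal := by
      rw [hLsp, ENNReal.toReal_add (hLfin u (le_trans hut ht)) hLqfin]
    have hAsp : A r = A u + aq := hAsplit u r hus hur.le hrδ
    have hfinal : F r ≤ B r := by
      have hBu := huS.2.2
      rw [hB] at hBu ⊢
      simp only at hBu ⊢
      rw [hLrt, hAsp]
      have hur' : ε * (r - s) = ε * (u - s) + ε * w := by rw [hw]; ring
      linarith [htp, hkey1, hkey3, hCd, hBu]
    have hrS : r ∈ S := ⟨⟨le_trans hus hur.le, hrt⟩, hfr_ne, hfinal⟩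
    have : r ≤ u := le_csSup hSbdd hrS
    linarith
  -- conclude
  rw [hueq] at huS
  refine ⟨huS.2.1, ?_⟩
  have hBt := huS.2.2
  rw [hB] at hBt
  simp only at hBt
  linarith [hBt]

lemma claimDown (lam : ℝ) (f : H → EReal) (hbot : ∀ z, f z ≠ ⊥) (hlsc : LowerSemicontinuous f)
    (δ : ℝ) (γ : ℝ → H) (g : ℝ → H)
    (hg : IntegrableOn g (Icc 0 δ))
    (hγeq : ∀ r ∈ Icc 0 δ, γ r = γ 0 + ∫ x in (0:ℝ)..r, g x)
    (hg2 : IntegrableOn (fun x => ‖g x‖ ^ 2) (Icc 0 δ))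
    (Hfin : ∫⁻ x in Ioc 0 δ, gradNorm lam f (γ x) ^ 2 ≠ ⊤)
    (s t : ℝ) (hs : 0 ≤ s) (hst : s ≤ t) (ht : t ≤ δ)
    (hft : f (γ t) ≠ ⊤) :
    f (γ s) ≠ ⊤ ∧ (f (γ s)).toReal ≤ (f (γ t)).toReal
      + (1 / 2) * ((∫⁻ x in Ioc s t, gradNorm lam f (γ x) ^ 2).toReal
        + ∫ x in Ioc s t, ‖g x‖ ^ 2) := by
  set C : ℝ := |lam| / 2 with hC
  have hC0 : 0 ≤ C := by positivity
  set G' : ℝ → ℝ≥0∞ := fun x => gradNorm lam f (γ x) ^ 2 with hG'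
  set A : ℝ → ℝ := fun r => ∫ x in Ioc r t, ‖g x‖ ^ 2 with hA
  set L : ℝ → ℝ≥0∞ := fun r => ∫⁻ x in Ioc r t, G' x with hL
  set F : ℝ → ℝ := fun r => (f (γ r)).toReal with hF
  have hsub : ∀ q r : ℝ, 0 ≤ q → r ≤ δ → Ioc q r ⊆ Icc 0 δ := by
    intro q r hq hr x hx
    exact ⟨le_trans hq (le_of_lt hx.1), le_trans hx.2 hr⟩
  have hgInt2 : ∀ q r : ℝ, 0 ≤ q → r ≤ δ → IntegrableOn (fun x => ‖g x‖ ^ 2) (Ioc q r) :=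
    fun q r hq hr => hg2.mono_set (hsub q r hq hr)
  have hgInt1 : ∀ q r : ℝ, 0 ≤ q → r ≤ δ → IntegrableOn (fun x => ‖g x‖) (Ioc q r) :=
    fun q r hq hr => IntegrableOn.mono_set hg.norm (hsub q r hq hr)
  have hIntNonneg : ∀ q r : ℝ, (0:ℝ) ≤ ∫ x in Ioc q r, ‖g x‖ ^ 2 :=
    fun q r => setIntegral_nonneg measurableSet_Ioc fun x _ => by positivity
  have hIntNonneg1 : ∀ q r : ℝ, (0:ℝ) ≤ ∫ x in Ioc q r, ‖g x‖ :=
    fun q r => setIntegral_nonneg measurableSet_Ioc fun x _ => by positivity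
  have hLfin : ∀ r : ℝ, 0 ≤ r → (∫⁻ x in Ioc r t, G' x) ≠ ⊤ := by
    intro r hr
    exact ne_top_of_le_ne_top Hfin (lintegral_mono_set (Ioc_subset_Ioc hr ht))
  have hLfin' : ∀ q r : ℝ, 0 ≤ q → r ≤ δ → (∫⁻ x in Ioc q r, G' x) ≠ ⊤ := by
    intro q r hq hr
    exact ne_top_of_le_ne_top Hfin (lintegral_mono_set (Ioc_subset_Ioc hq hr))
  have hAmono : ∀ q r : ℝ, 0 ≤ q → q ≤ r → A r ≤ A q := by
    intro q r hq hqr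
    exact setIntegral_mono_set (hgInt2 q t hq ht)
      (Filter.Eventually.of_forall fun x => by positivity)
      (HasSubset.Subset.eventuallyLE (Ioc_subset_Ioc_left hqr))
  have hAsplit : ∀ q r : ℝ, 0 ≤ q → q ≤ r → r ≤ t →
      A q = (∫ x in Ioc q r, ‖g x‖ ^ 2) + A r := by
    intro q r hq hqr hr
    have : Ioc q t = Ioc q r ∪ Ioc r t := (Ioc_union_Ioc_eq_Ioc hqr hr).symm
    rw [hA]
    simp only
    rw [this, setIntegral_union (Set.Ioc_disjoint_Ioc_of_le le_rfl) measurableSet_Ioc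
      (hgInt2 q r hq (le_trans hr ht)) (hgInt2 r t (le_trans hq hqr) ht)]
  have hLsplit : ∀ q r : ℝ, q ≤ r → r ≤ t →
      (∫⁻ x in Ioc q t, G' x) = (∫⁻ x in Ioc q r, G' x) + ∫⁻ x in Ioc r t, G' x := by
    intro q r hqr hr
    have : Ioc q t = Ioc q r ∪ Ioc r t := (Ioc_union_Ioc_eq_Ioc hqr hr).symm
    rw [this, lintegral_union measurableSet_Ioc (Set.Ioc_disjoint_Ioc_of_le le_rfl)]
  have hγc : ContinuousOn γ (Icc 0 δ) := gammaCont hg hγeq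
  suffices hkey : ∀ ε : ℝ, 0 < ε → f (γ s) ≠ ⊤ ∧
      F s ≤ F t + (1 / 2) * ((L s).toReal + A s) + ε * ((t - s) + C * A s) by
    refine ⟨(hkey 1 one_pos).1, ?_⟩
    refine le_of_forall_eps (K := (t - s) + C * A s) ?_ fun ε hε => (hkey ε hε).2
    have h0 := hIntNonneg s t
    have h1 : 0 ≤ A s := by rw [hA]; exact h0
    nlinarith
  intro ε hε
  set B : ℝ → ℝ := fun r =>
    F t + (1 / 2) * ((L r).toReal + A r) + ε * (t - r) + C * ε * A r with hB
  set S : Set ℝ := {r | r ∈ Icc s t ∧ f (γ r) ≠ ⊤ ∧ F r ≤ B r} with hS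
  have htS : t ∈ S := by
    refine ⟨⟨hst, le_refl t⟩, hft, ?_⟩
    have h1 : A t = 0 := by rw [hA]; simp [Set.Ioc_self]
    have h2 : L t = 0 := by rw [hL]; simp [Set.Ioc_self]
    rw [hB]
    simp only [h1, h2]
    simp
  have hSbdd : BddBelow S := ⟨s, fun r hr => hr.1.1⟩
  have hSne : S.Nonempty := ⟨t, htS⟩
  set u : ℝ := sInf S with hu
  have hus : s ≤ u := le_csInf hSne fun r hr => hr.1.1
  have hut : u ≤ t := csInf_le hSbdd htS
  have huIcc : u ∈ Icc 0 δ := ⟨le_trans hs hus, le_trans hut ht⟩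
  have hBanti : ∀ q r : ℝ, 0 ≤ q → q ≤ r → r ≤ t → B r ≤ B q := by
    intro q r hq hqr hr
    have h1 : (L r).toReal ≤ (L q).toReal :=
      ENNReal.toReal_mono (hLfin q hq) (lintegral_mono_set (Ioc_subset_Ioc_left hqr))
    have h2 : A r ≤ A q := hAmono q r hq hqr
    have h3 : C * ε * A r ≤ C * ε * A q :=
      mul_le_mul_of_nonneg_left h2 (by positivity)
    have h4 : ε * (t - r) ≤ ε * (t - q) := by nlinarith
    rw [hB]; simp only; linarith
  -- Step A : u ∈ S
  have huS : u ∈ S := by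
    have hfu : f (γ u) ≤ ((B u : ℝ) : EReal) := by
      by_contra hcon
      push_neg at hcon
      have hev := hlsc (γ u) _ hcon
      have hcw : ContinuousWithinAt γ (Icc 0 δ) u := hγc u huIcc
      have hev2 : ∀ᶠ r in 𝓝[Icc 0 δ] u, ((B u : ℝ) : EReal) < f (γ r) := hcw.eventually hev
      rw [eventually_nhdsWithin_iff, Metric.eventually_nhds_iff] at hev2
      obtain ⟨η, hη, hball⟩ := hev2
      obtain ⟨r, hrS, hrlt⟩ := exists_lt_of_csInf_lt hSne (lt_add_of_pos_right u hη)
      have hru : u ≤ r := csInf_le hSbdd hrS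
      have hdist : dist r u < η := by
        rw [Real.dist_eq, abs_lt]; constructor <;> linarith
      have hrIcc : r ∈ Icc 0 δ := ⟨le_trans hs hrS.1.1, le_trans hrS.1.2 ht⟩
      have hlt := hball hdist hrIcc
      have hle : f (γ r) ≤ ((B u : ℝ) : EReal) := by
        rw [← EReal.coe_toReal hrS.2.1 (hbot (γ r))]
        exact_mod_cast le_trans hrS.2.2
          (hBanti u r (le_trans hs hus) hru hrS.1.2)
      exact absurd (lt_of_lt_of_le hlt hle) (lt_irrefl _)
    refine ⟨⟨hus, hut⟩, ne_top_of_le_ne_top (EReal.coe_ne_top _) hfu, ?_⟩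
    have := EReal.toReal_le_toReal hfu (hbot (γ u)) (EReal.coe_ne_top _)
    rw [EReal.toReal_coe] at this
    exact this
  -- Step B : u = s
  have hueq : u = s := by
    by_contra hune
    have hslt : s < u := lt_of_le_of_ne hus (fun h => hune h.symm)
    set b : ℝ := max (u - ε) s with hb
    have hub : b < u := max_lt (by linarith) hslt
    have hbs : s ≤ b := le_max_right _ _
    have hb0 : 0 ≤ b := le_trans hs hbs
    have hWsub : Ioo b u ⊆ Ioc 0 δ := fun x hx =>
      ⟨lt_of_le_of_lt hb0 hx.1, le_trans (le_of_lt hx.2) (le_trans hut ht)⟩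
    set m : ℝ≥0∞ := ⨅ x ∈ Ioo b u, G' x with hm
    have hmtop : m ≠ ⊤ := by
      intro hmt
      have hall : ∀ x ∈ Ioo b u, G' x = ⊤ := by
        intro x hx
        have : m ≤ G' x := iInf₂_le x hx
        rw [hmt] at this
        exact top_le_iff.mp this
      have h1 : (⊤ : ℝ≥0∞) * volume (Ioo b u) ≤ ∫⁻ x in Ioo b u, G' x := by
        rw [← setLIntegral_const]
        exact setLIntegral_mono' measurableSet_Ioo fun x hx => le_of_eq (hall x hx).symm
      have h2 : volume (Ioo b u) ≠ 0 := by
        rw [Real.volume_Ioo]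
        simp only [ne_eq, ENNReal.ofReal_eq_zero, not_le]
        linarith
      rw [ENNReal.top_mul h2] at h1
      have h3 : (∫⁻ x in Ioo b u, G' x) ≤ ∫⁻ x in Ioc 0 δ, G' x := lintegral_mono_set hWsub
      exact Hfin (top_le_iff.mp (le_trans h1 h3))
    obtain ⟨r, hrW, hrlt⟩ : ∃ r ∈ Ioo b u, G' r < m + ENNReal.ofReal ε := by
      by_contra hc
      push_neg at hc
      have h1 : m + ENNReal.ofReal ε ≤ m := le_iInf₂ hc
      have h2 : m < m + ENNReal.ofReal ε :=
        ENNReal.lt_add_right hmtop (by simp [ne_eq, ENNReal.ofReal_eq_zero, not_le, hε])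
      exact absurd h1 (not_le.mpr h2)
    have hGr_ne : G' r ≠ ⊤ :=
      ne_top_of_le_ne_top (ENNReal.add_ne_top.mpr ⟨hmtop, ENNReal.ofReal_ne_top⟩) hrlt.le
    have hsubne : (subdiff lam f (γ r)).Nonempty := by
      by_contra hemp
      rw [not_nonempty_iff_eq_empty] at hemp
      apply hGr_ne
      rw [hG']
      simp only [gradNorm, hemp]
      simp [ENNReal.top_pow]
    obtain ⟨hpmem, hgnval⟩ := gradMin_spec lam f hbot hsubne
    set p : H := gradMin lam f (γ r) with hp
    have hfr_ne : f (γ r) ≠ ⊤ := hpmem.1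
    have hp2 : ‖p‖ ^ 2 ≤ m.toReal + ε := by
      have h1 : G' r = ENNReal.ofReal (‖p‖ ^ 2) := by
        rw [hG']
        simp only
        rw [hgnval, ← ENNReal.ofReal_pow (norm_nonneg _)]
      have h2 := ENNReal.toReal_mono (ENNReal.add_ne_top.mpr ⟨hmtop, ENNReal.ofReal_ne_top⟩)
        hrlt.le
      rw [h1, ENNReal.toReal_ofReal (by positivity),
        ENNReal.toReal_add hmtop ENNReal.ofReal_ne_top,
        ENNReal.toReal_ofReal hε.le] at h2
      exact h2
    have hbr : b < r := hrW.1
    have hru : r < u := hrW.2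
    have hrs : s ≤ r := le_trans hbs (le_of_lt hbr)
    have hr0 : 0 ≤ r := le_trans hs hrs
    have huδ : u ≤ δ := le_trans hut ht
    set w : ℝ := u - r with hw
    have hw0 : 0 < w := by rw [hw]; linarith
    have hwh : w ≤ ε := by
      rw [hw]
      have := le_max_left (u - ε) s
      linarith [hbr, this]
    set σ : ℝ := ∫ x in Ioc r u, ‖g x‖ with hσ
    have hσ0 : 0 ≤ σ := hIntNonneg1 r u
    set aq : ℝ := ∫ x in Ioc r u, ‖g x‖ ^ 2 with haq
    have haq0 : 0 ≤ aq := hIntNonneg r u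
    have hD : ‖γ r - γ u‖ ≤ σ := by
      rw [norm_sub_rev]
      exact gammaDiff hg hγeq hr0 (le_of_lt hru) huδ
    have hD0 : (0:ℝ) ≤ ‖γ r - γ u‖ := norm_nonneg _
    have hσsq : σ ^ 2 ≤ w * aq := by
      rw [hσ, haq, hw]
      exact sq_setIntegral_le (le_of_lt hru) (hgInt1 r u hr0 huδ) (hgInt2 r u hr0 huδ)
    set Lq : ℝ≥0∞ := ∫⁻ x in Ioc r u, G' x with hLq
    have hLqfin : Lq ≠ ⊤ := hLfin' r u hr0 huδ
    have hwm : w * m.toReal ≤ Lq.toReal := by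
      have h1 : m * volume (Ioo r u) ≤ Lq := by
        have h0 : (∫⁻ x in Ioo r u, G' x) ≤ Lq := lintegral_mono_set Ioo_subset_Ioc_self
        refine le_trans ?_ h0
        rw [← setLIntegral_const]
        exact setLIntegral_mono' measurableSet_Ioo fun x hx =>
          iInf₂_le x ⟨lt_trans hbr hx.1, hx.2⟩
      have h2 : volume (Ioo r u) = ENNReal.ofReal w := by rw [Real.volume_Ioo]
      rw [h2] at h1
      have h3 := ENNReal.toReal_mono hLqfin h1
      rw [ENNReal.toReal_mul, ENNReal.toReal_ofReal hw0.le] at h3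
      linarith
    -- two-point estimate (subgradient at γ r, other point γ u)
    have htp := twoPoint lam f hbot hpmem huS.2.1
    rw [← hC] at htp
    have hkey1 : ‖p‖ * ‖γ r - γ u‖ ≤ ‖p‖ * σ := mul_le_mul_of_nonneg_left hD (norm_nonneg p)
    have hkey3 : ‖p‖ * σ ≤ (1 / 2) * (Lq.toReal + aq) + ε * w := by
      have h2w : (0:ℝ) < 2 * w := by linarith
      rw [← mul_le_mul_iff_right₀ h2w]
      clear_value w σ aq Lq m p
      linarith [sq_nonneg (w * ‖p‖ - σ), mul_le_mul_of_nonneg_left hp2 (sq_nonneg w),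
        mul_le_mul_of_nonneg_left hwm hw0.le, hσsq, mul_nonneg hε.le (sq_nonneg w)]
    have hDsq : ‖γ r - γ u‖ ^ 2 ≤ w * aq := by
      have := pow_le_pow_left₀ hD0 hD 2
      linarith
    have hCd : C * ‖γ r - γ u‖ ^ 2 ≤ C * ε * aq := by
      have h1 : w * aq ≤ ε * aq := mul_le_mul_of_nonneg_right hwh haq0
      have h2 := mul_le_mul_of_nonneg_left (le_trans hDsq h1) hC0
      linarith [h2]
    have hLsp : L r = Lq + L u := hLsplit r u (le_of_lt hru) hut
    have hLrt : (L r).toReal = Lq.toReal + (L u).toReal := by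
      rw [hLsp, ENNReal.toReal_add hLqfin (hLfin u (le_trans hs hus))]
    have hAsp : A r = aq + A u := hAsplit r u hr0 (le_of_lt hru) hut
    have hfinal : F r ≤ B r := by
      have hBu := huS.2.2
      rw [hB] at hBu ⊢
      simp only at hBu ⊢
      rw [hLrt, hAsp]
      linarith [htp, hkey1, hkey3, hCd, hBu]
    have hrS : r ∈ S := ⟨⟨hrs, le_trans (le_of_lt hru) hut⟩, hfr_ne, hfinal⟩
    have : u ≤ r := csInf_le hSbdd hrS
    linarith
  -- conclude
  rw [hueq] at huS
  refine ⟨huS.2.1, ?_⟩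
  have hBt := huS.2.2
  rw [hB] at hBt
  simp only at hBt
  linarith [hBt]

theorem statement14' (lam : ℝ) (f : H → EReal)
    (hf : (∃ x, f x ≠ ⊤) ∧ ∀ x, f x ≠ ⊥) (hlsc : LowerSemicontinuous f)
    (δ : ℝ) (hδ : 0 < δ) (γ : ℝ → H)
    (hAC : ∃ g : ℝ → H, IntegrableOn g (Icc 0 δ) ∧ ∀ t ∈ Icc 0 δ, γ t = γ 0 + ∫ s in (0:ℝ)..t, g s)
    (hfin : (∫⁻ t in Ioc 0 δ,
      (ENNReal.ofReal (‖hAC.choose t‖ ^ 2) + gradNorm lam f (γ t) ^ 2)) ≠ ⊤) :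
    f (γ 0) ≠ ⊤ ∧ f (γ δ) ≠ ⊤ ∧
      ENNReal.ofReal (2 * |(f (γ δ)).toReal - (f (γ 0)).toReal|)
        ≤ ∫⁻ t in Ioc 0 δ, (ENNReal.ofReal (‖hAC.choose t‖ ^ 2) + gradNorm lam f (γ t) ^ 2) := by
  have hbot : ∀ z, f z ≠ ⊥ := hf.2
  set g : ℝ → H := hAC.choose with hgdef
  have hg : IntegrableOn g (Icc 0 δ) := hAC.choose_spec.1
  have hγeq : ∀ r ∈ Icc 0 δ, γ r = γ 0 + ∫ x in (0:ℝ)..r, g x := hAC.choose_spec.2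
  -- split the action integral
  have hmeas : AEMeasurable (fun t => ENNReal.ofReal (‖g t‖ ^ 2)) (volume.restrict (Ioc 0 δ)) := by
    have h1 : AEStronglyMeasurable g (volume.restrict (Ioc 0 δ)) :=
      hg.aestronglyMeasurable.mono_measure
        (Measure.restrict_mono Ioc_subset_Icc_self le_rfl)
    exact (h1.norm.aemeasurable.pow_const 2).ennreal_ofReal
  have hsplit : (∫⁻ t in Ioc 0 δ,
        (ENNReal.ofReal (‖g t‖ ^ 2) + gradNorm lam f (γ t) ^ 2))
      = (∫⁻ t in Ioc 0 δ, ENNReal.ofReal (‖g t‖ ^ 2))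
        + ∫⁻ t in Ioc 0 δ, gradNorm lam f (γ t) ^ 2 :=
    lintegral_add_left' hmeas _
  rw [hsplit] at hfin
  have Hfin1 : (∫⁻ t in Ioc 0 δ, ENNReal.ofReal (‖g t‖ ^ 2)) ≠ ⊤ :=
    fun h => hfin (by rw [h]; simp)
  have Hfin2 : (∫⁻ t in Ioc 0 δ, gradNorm lam f (γ t) ^ 2) ≠ ⊤ :=
    fun h => hfin (by rw [h]; simp)
  -- integrability of ‖g‖² on Icc 0 δ
  have hg2 : IntegrableOn (fun x => ‖g x‖ ^ 2) (Icc 0 δ) := by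
    have hsm : AEStronglyMeasurable (fun x => ‖g x‖ ^ 2) (volume.restrict (Icc 0 δ)) :=
      (hg.aestronglyMeasurable.norm.aemeasurable.pow_const 2).aestronglyMeasurable
    refine ⟨hsm, ?_⟩
    rw [hasFiniteIntegral_iff_ofReal (Filter.Eventually.of_forall fun x => by positivity)]
    rw [← Measure.restrict_congr_set Ioc_ae_eq_Icc]
    exact lt_top_iff_ne_top.mpr Hfin1
  -- a point where the slope is finite
  obtain ⟨t0, ht0mem, ht0⟩ : ∃ t0 ∈ Ioc 0 δ, gradNorm lam f (γ t0) ^ 2 ≠ ⊤ := by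
    by_contra hc
    push_neg at hc
    apply Hfin2
    have h1 : (⊤ : ℝ≥0∞) * volume (Ioc 0 δ) ≤ ∫⁻ x in Ioc 0 δ, gradNorm lam f (γ x) ^ 2 := by
      rw [← setLIntegral_const]
      exact setLIntegral_mono' measurableSet_Ioc fun x hx => le_of_eq (hc x hx).symm
    have h2 : volume (Ioc 0 δ) ≠ 0 := by
      rw [Real.volume_Ioc]
      simp only [ne_eq, ENNReal.ofReal_eq_zero, not_le]
      linarith
    rw [ENNReal.top_mul h2] at h1
    exact top_le_iff.mp h1
  have hft0 : f (γ t0) ≠ ⊤ := by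
    have hsubne : (subdiff lam f (γ t0)).Nonempty := by
      by_contra hemp
      rw [not_nonempty_iff_eq_empty] at hemp
      apply ht0
      simp only [gradNorm, hemp]
      simp [ENNReal.top_pow]
    obtain ⟨p, hp⟩ := hsubne
    exact hp.1
  -- finiteness at the endpoints
  have hd1 := claimDown lam f hbot hlsc δ γ g hg hγeq hg2 Hfin2 0 t0 le_rfl
    ht0mem.1.le ht0mem.2 hft0
  have hup := claimUp lam f hbot hlsc δ γ g hg hγeq hg2 Hfin2 0 δ le_rfl hδ.le le_rfl hd1.1
  have hdn := claimDown lam f hbot hlsc δ γ g hg hγeq hg2 Hfin2 0 δ le_rfl hδ.le le_rfl hup.1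
  refine ⟨hd1.1, hup.1, ?_⟩
  rw [hsplit]
  set Ltot : ℝ≥0∞ := ∫⁻ x in Ioc 0 δ, gradNorm lam f (γ x) ^ 2 with hLtot
  set Atot : ℝ := ∫ x in Ioc 0 δ, ‖g x‖ ^ 2 with hAtot
  have hAtot0 : 0 ≤ Atot := setIntegral_nonneg measurableSet_Ioc fun x _ => by positivity
  have hAL : ENNReal.ofReal Atot = ∫⁻ t in Ioc 0 δ, ENNReal.ofReal (‖g t‖ ^ 2) :=
    ofReal_integral_eq_lintegral_ofReal (hg2.mono_set Ioc_subset_Icc_self)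
      (Filter.Eventually.of_forall fun x => by positivity)
  have habs : 2 * |(f (γ δ)).toReal - (f (γ 0)).toReal| ≤ Ltot.toReal + Atot := by
    have h1 := hup.2
    have h2 := hdn.2
    have h3 : |(f (γ δ)).toReal - (f (γ 0)).toReal| ≤ (1 / 2) * (Ltot.toReal + Atot) :=
      abs_le.mpr ⟨by linarith, by linarith⟩
    linarith
  have hstep : ENNReal.ofReal (2 * |(f (γ δ)).toReal - (f (γ 0)).toReal|)
      ≤ ENNReal.ofReal (Atot + Ltot.toReal) := ENNReal.ofReal_le_ofReal (by linarith)
  refine le_trans hstep ?_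
  rw [ENNReal.ofReal_add hAtot0 ENNReal.toReal_nonneg, hAL, ENNReal.ofReal_toReal Hfin2]

/-- finiteness of `f` at the endpoints and `2|f(γ(δ)) - f(γ(0))| ≤ I_f^δ(γ)`. -/
theorem statement14 (lam : ℝ) (f : H → EReal)
    (hf : ProperFn f) (hconv : LambdaConvex lam f) (hlsc : LowerSemicontinuous f)
    (δ : ℝ) (hδ : 0 < δ) (γ : ℝ → H) (hAC : IsACCurve 0 δ γ)
    (hfin : actionFn lam f 0 δ γ ≠ ⊤) :
    f (γ 0) ≠ ⊤ ∧ f (γ δ) ≠ ⊤ ∧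
      ENNReal.ofReal (2 * |(f (γ δ)).toReal - (f (γ 0)).toReal|) ≤ actionFn lam f 0 δ γ := by
  have hact : actionFn lam f 0 δ γ = ∫⁻ t in Ioc 0 δ,
      (ENNReal.ofReal (‖hAC.choose t‖ ^ 2) + gradNorm lam f (γ t) ^ 2) := dif_pos hAC
  rw [hact] at hfin ⊢
  exact statement14' lam f hf hlsc δ hδ γ hAC hfin

end
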